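/- Let λ, μ, α > 0 and let φ satisfy φ(T) → ∞, φ(T)/T → 0 as T → ∞, and φ(T)/T^a → ∞ for some a ∈ (0,1). Then for every x > 0, liminf_{T→∞} (1/φ(T)) ln P(ξ_T(1) ≥ x) ≥ −x·ln((λ+μ)/λ). -/

import Mathlib

open MeasureTheory ProbabilityTheory Filter Set
open scoped ENNReal Topology

noncomputable section

/-- Transition probabilities of the embedded Markov chain of the Poisson process with
uniform catastrophes: from `i ≥ 1`, go to `i+1` with probability `λ/(λ+μ)` and to each
`j < i` with probability `μ/(i(λ+μ))`; from `0`, go to `1` with probability `1`. -/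
def transP (lam mu : ℝ) (i j : ℕ) : ℝ :=
  if i = 0 then (if j = 1 then 1 else 0)
  else if j = i + 1 then lam / (lam + mu)
  else if j < i then mu / (i * (lam + mu))
  else 0

/-- `η` is (distributed as) the discrete-time Markov chain on `ℕ` started at `x` with
transition probabilities `transP lam mu`, under the probability measure `P`:
the finite-dimensional distributions are products of transition probabilities. -/
def IsMarkovChainFrom {Ω : Type*} [MeasurableSpace Ω] (P : Measure Ω)
    (lam mu : ℝ) (x : ℕ) (η : ℕ → Ω → ℕ) : Prop :=
  (∀ k, Measurable (η k)) ∧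
  ∀ (n : ℕ) (path : ℕ → ℕ),
    P {ω | ∀ l ≤ n, η l ω = path l} =
      (if path 0 = x then 1 else 0) *
        ∏ l ∈ Finset.range n, ENNReal.ofReal (transP lam mu (path l) (path (l + 1)))

/-- `ν` is a Poisson process of rate `α` under `P`: it starts at `0`, has monotone paths
on `[0,∞)`, independent increments, and each increment over `[s,t]` is Poisson
distributed with mean `α(t-s)`. -/
def IsPoissonProcess {Ω : Type*} [MeasurableSpace Ω] (P : Measure Ω)
    (α : ℝ) (ν : ℝ → Ω → ℕ) : Prop :=
  (∀ t, Measurable (ν t)) ∧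
  (∀ ω, ν 0 ω = 0) ∧
  (∀ ω, MonotoneOn (fun t => ν t ω) (Set.Ici (0 : ℝ))) ∧
  (∀ (n : ℕ) (t : ℕ → ℝ), 0 ≤ t 0 → Monotone t →
    iIndepFun
      (fun i : Fin n => fun ω => ν (t (i + 1)) ω - ν (t i) ω) P) ∧
  (∀ s t : ℝ, 0 ≤ s → s ≤ t → ∀ k : ℕ,
    P {ω | ν t ω - ν s ω = k} =
      ENNReal.ofReal (Real.exp (-(α * (t - s))) * (α * (t - s)) ^ k / (Nat.factorial k)))

/-- The processes `η` and `ν` are independent (as processes). -/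
def IndepProc {Ω : Type*} [MeasurableSpace Ω] (P : Measure Ω)
    (η : ℕ → Ω → ℕ) (ν : ℝ → Ω → ℕ) : Prop :=
  IndepFun (fun ω => fun k => η k ω) (fun ω => fun t => ν t ω) P

/-! ### Auxiliary lemmas -/

lemma exp_one_le_pow_aux (m : ℕ) (hm : 1 ≤ m) :
    Real.exp 1 * (m : ℝ) ^ (m + 1) ≤ ((m : ℝ) + 1) ^ (m + 1) := by
  have hm0 : (0:ℝ) < m := by exact_mod_cast hm
  have h1 : Real.log ((m:ℝ) / (m + 1)) ≤ (m:ℝ) / (m + 1) - 1 :=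
    Real.log_le_sub_one_of_pos (by positivity)
  have h2 : (1:ℝ) / (m + 1) ≤ Real.log (((m:ℝ) + 1) / m) := by
    have he : Real.log (((m:ℝ) + 1) / m) = - Real.log ((m:ℝ) / (m + 1)) := by
      rw [← Real.log_inv]; congr 1; field_simp
    have he2 : (m:ℝ) / (m + 1) - 1 = -(1 / (m + 1)) := by field_simp; ring
    rw [he]; linarith [h1, he2 ▸ h1]
  have hkey : (1:ℝ) ≤ ((m:ℝ) + 1) * Real.log (((m:ℝ) + 1) / m) := by
    calc (1:ℝ) = ((m:ℝ) + 1) * (1 / (m + 1)) := by field_simp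
    _ ≤ _ := mul_le_mul_of_nonneg_left h2 (by positivity)
  have h3 : Real.exp 1 ≤ (((m:ℝ) + 1) / m) ^ (m + 1) := by
    calc Real.exp 1 ≤ Real.exp (((m:ℝ) + 1) * Real.log (((m:ℝ) + 1) / m)) :=
      Real.exp_le_exp.mpr hkey
    _ = (((m:ℝ) + 1) / m) ^ (m + 1) := by
        rw [show ((m:ℝ) + 1) = ((m + 1 : ℕ) : ℝ) by push_cast; ring, Real.exp_nat_mul,
          Real.exp_log (by positivity)]
  calc Real.exp 1 * (m : ℝ) ^ (m + 1)
      ≤ (((m:ℝ) + 1) / m) ^ (m + 1) * (m : ℝ) ^ (m + 1) :=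
        mul_le_mul_of_nonneg_right h3 (by positivity)
  _ = ((m : ℝ) + 1) ^ (m + 1) := by
      rw [div_pow, div_mul_cancel₀]
      positivity

lemma factorial_le_aux : ∀ m : ℕ, 1 ≤ m →
    (m.factorial : ℝ) ≤ Real.exp 1 * m * ((m : ℝ) / Real.exp 1) ^ m := by
  intro m
  induction m with
  | zero => intro h; omega
  | succ m ih =>
    intro _
    rcases Nat.eq_zero_or_pos m with rfl | hm
    · have h1 : Real.exp 1 * (1:ℝ) * (1 / Real.exp 1) ^ 1 = 1 := by
        field_simp
      rw [show ((0+1 : ℕ).factorial : ℝ) = 1 by norm_num [Nat.factorial]]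
      push_cast
      rw [h1]
    · have hm0 : (0:ℝ) < m := by exact_mod_cast hm
      have he : (0:ℝ) < Real.exp 1 := Real.exp_pos 1
      have key := exp_one_le_pow_aux m hm
      have step : Real.exp 1 * (m:ℝ) * ((m : ℝ) / Real.exp 1) ^ m
          ≤ Real.exp 1 * (((m:ℝ) + 1) / Real.exp 1) ^ (m + 1) := by
        rw [div_pow, div_pow, show Real.exp 1 * (m:ℝ) * ((m:ℝ) ^ m / Real.exp 1 ^ m)
            = (Real.exp 1 * (m:ℝ) * (m:ℝ) ^ m) / Real.exp 1 ^ m by ring,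
          show Real.exp 1 * (((m:ℝ) + 1) ^ (m+1) / Real.exp 1 ^ (m+1))
            = (Real.exp 1 * ((m:ℝ) + 1) ^ (m+1)) / Real.exp 1 ^ (m+1) by ring,
          div_le_div_iff₀ (by positivity) (by positivity), pow_succ (Real.exp 1) m]
        have hpos : (0:ℝ) < Real.exp 1 ^ m * Real.exp 1 := by positivity
        have key2 : Real.exp 1 * ((m:ℝ)^m * m) ≤ ((m:ℝ)+1)^(m+1) := by
          rw [← pow_succ]; exact key
        nlinarith [mul_le_mul_of_nonneg_left key2 hpos.le]
      calc ((m + 1).factorial : ℝ) = ((m:ℝ) + 1) * m.factorial := by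
            rw [Nat.factorial_succ]; push_cast; ring
      _ ≤ ((m:ℝ) + 1) * (Real.exp 1 * m * ((m : ℝ) / Real.exp 1) ^ m) :=
            mul_le_mul_of_nonneg_left (ih hm) (by positivity)
      _ ≤ ((m:ℝ) + 1) * (Real.exp 1 * (((m:ℝ) + 1) / Real.exp 1) ^ (m + 1)) :=
            mul_le_mul_of_nonneg_left step (by positivity)
      _ = Real.exp 1 * ((m + 1 : ℕ) : ℝ) * (((m + 1 : ℕ) : ℝ) / Real.exp 1) ^ (m + 1) := by
            push_cast; ring

/-- Extension of a finite path by consecutive up-steps. -/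
def extPath (k : ℕ) (i : Fin (k+1) → ℕ) : ℕ → ℕ :=
  fun l => if h : l ≤ k then i ⟨l, Nat.lt_succ_of_le h⟩ else i (Fin.last k) + (l - k)

lemma extPath_le {k : ℕ} (i : Fin (k+1) → ℕ) {l : ℕ} (h : l ≤ k) :
    extPath k i l = i ⟨l, Nat.lt_succ_of_le h⟩ := dif_pos h

lemma extPath_step {k : ℕ} (i : Fin (k+1) → ℕ) (j : ℕ) :
    extPath k i (k+j+1) = extPath k i (k+j) + 1 := by
  rcases Nat.eq_zero_or_pos j with rfl | hj
  · rw [show k + 0 + 1 = k + 1 by ring, extPath, extPath]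
    rw [dif_neg (by omega), dif_pos (by omega)]
    have : k + 1 - k = 1 := by omega
    rw [this]
    congr 1
  · rw [extPath, extPath, dif_neg (by omega), dif_neg (by omega)]
    omega

lemma transP_step {lam mu : ℝ} (hlam : 0 < lam) (hmu : 0 < mu) (b : ℕ) :
    lam / (lam + mu) ≤ transP lam mu b (b + 1) := by
  rcases Nat.eq_zero_or_pos b with rfl | hb
  · simp only [transP]
    norm_num
    rw [div_le_one (by linarith)]
    linarith
  · rw [transP, if_neg (by omega), if_pos rfl]

/-- Key lower bound: the probability that the chain makes `n` consecutive up-steps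
after time `k` is at least `(λ/(λ+μ))^n`. -/
lemma chain_step_lb {Ω : Type*} [MeasurableSpace Ω] (P : Measure Ω) [IsProbabilityMeasure P]
    {lam mu : ℝ} {η : ℕ → Ω → ℕ} (hlam : 0 < lam) (hmu : 0 < mu)
    (hη : IsMarkovChainFrom P lam mu 0 η) (k n : ℕ) :
    ENNReal.ofReal ((lam/(lam+mu))^n) ≤ P {ω | ∀ j < n, η (k+j+1) ω = η (k+j) ω + 1} := by
  obtain ⟨hmeas, hfdd⟩ := hη
  have hr0 : (0:ℝ) ≤ lam/(lam+mu) := div_nonneg hlam.le (by linarith)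
  set C : (Fin (k+1) → ℕ) → Set Ω :=
    fun i => {ω | ∀ l ≤ k + n, η l ω = extPath k i l} with hC
  set C' : (Fin (k+1) → ℕ) → Set Ω :=
    fun i => {ω | ∀ l ≤ k, η l ω = extPath k i l} with hC'
  have hCmeas : ∀ i, MeasurableSet (C i) := by
    intro i
    have : C i = ⋂ (l : ℕ), ⋂ (_ : l ≤ k + n), (η l) ⁻¹' {extPath k i l} := by
      ext ω; simp [hC]
    rw [this]
    exact MeasurableSet.iInter fun l => MeasurableSet.iInter fun _ =>
      (hmeas l) (measurableSet_singleton _)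
  have hC'meas : ∀ i, MeasurableSet (C' i) := by
    intro i
    have : C' i = ⋂ (l : ℕ), ⋂ (_ : l ≤ k), (η l) ⁻¹' {extPath k i l} := by
      ext ω; simp [hC']
    rw [this]
    exact MeasurableSet.iInter fun l => MeasurableSet.iInter fun _ =>
      (hmeas l) (measurableSet_singleton _)
  have hdisjC : Pairwise (Function.onFun Disjoint C) := by
    intro i i' hne
    rw [Function.onFun, Set.disjoint_left]
    intro ω h1 h2
    apply hne
    funext l
    have e1 := h1 l.1 (le_trans (Nat.lt_succ_iff.mp l.isLt) (Nat.le_add_right _ _))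
    have e2 := h2 l.1 (le_trans (Nat.lt_succ_iff.mp l.isLt) (Nat.le_add_right _ _))
    rw [extPath_le i (Nat.lt_succ_iff.mp l.isLt)] at e1
    rw [extPath_le i' (Nat.lt_succ_iff.mp l.isLt)] at e2
    rw [Fin.eta] at e1 e2
    rw [← e1, ← e2]
  have hdisjC' : Pairwise (Function.onFun Disjoint C') := by
    intro i i' hne
    rw [Function.onFun, Set.disjoint_left]
    intro ω h1 h2
    apply hne
    funext l
    have e1 := h1 l.1 (Nat.lt_succ_iff.mp l.isLt)
    have e2 := h2 l.1 (Nat.lt_succ_iff.mp l.isLt)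
    rw [extPath_le i (Nat.lt_succ_iff.mp l.isLt)] at e1
    rw [extPath_le i' (Nat.lt_succ_iff.mp l.isLt)] at e2
    rw [Fin.eta] at e1 e2
    rw [← e1, ← e2]
  have hsum' : ∑' i, P (C' i) = 1 := by
    rw [← measure_iUnion hdisjC' hC'meas]
    have : ⋃ i, C' i = univ := by
      ext ω
      simp only [mem_iUnion, mem_univ, iff_true]
      refine ⟨fun l => η l.1 ω, fun l hl => ?_⟩
      rw [extPath_le _ hl]
    rw [this, measure_univ]
  have hsub : ∀ i, C i ⊆ {ω | ∀ j < n, η (k+j+1) ω = η (k+j) ω + 1} := by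
    intro i ω hω j hj
    rw [hω (k+j+1) (by omega), hω (k+j) (by omega), extPath_step]
  have hle1 : ∑' i, P (C i) ≤ P {ω | ∀ j < n, η (k+j+1) ω = η (k+j) ω + 1} := by
    rw [← measure_iUnion hdisjC hCmeas]
    exact measure_mono (iUnion_subset hsub)
  have hfac : ∀ i, ENNReal.ofReal ((lam/(lam+mu))^n) * P (C' i) ≤ P (C i) := by
    intro i
    rw [hC, hC']
    simp only
    rw [hfdd (k+n) (extPath k i), hfdd k (extPath k i), Finset.prod_range_add]
    have h2 : ENNReal.ofReal ((lam/(lam+mu))^n) ≤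
        ∏ j ∈ Finset.range n,
          ENNReal.ofReal (transP lam mu (extPath k i (k+j)) (extPath k i (k+j+1))) := by
      calc ENNReal.ofReal ((lam/(lam+mu))^n)
          = ∏ _j ∈ Finset.range n, ENNReal.ofReal (lam/(lam+mu)) := by
            rw [ENNReal.ofReal_pow hr0, Finset.prod_const, Finset.card_range]
      _ ≤ _ := Finset.prod_le_prod' fun j _ => ENNReal.ofReal_le_ofReal (by
            rw [extPath_step]; exact transP_step hlam hmu _)
    calc ENNReal.ofReal ((lam/(lam+mu))^n) *
          ((if extPath k i 0 = 0 then 1 else 0) *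
            ∏ l ∈ Finset.range k,
              ENNReal.ofReal (transP lam mu (extPath k i l) (extPath k i (l+1))))
        ≤ (∏ j ∈ Finset.range n,
            ENNReal.ofReal (transP lam mu (extPath k i (k+j)) (extPath k i (k+j+1)))) *
          ((if extPath k i 0 = 0 then 1 else 0) *
            ∏ l ∈ Finset.range k,
              ENNReal.ofReal (transP lam mu (extPath k i l) (extPath k i (l+1)))) :=
          mul_le_mul_left h2 _
    _ = (if extPath k i 0 = 0 then 1 else 0) *
          ((∏ l ∈ Finset.range k,
            ENNReal.ofReal (transP lam mu (extPath k i l) (extPath k i (l+1)))) *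
           ∏ j ∈ Finset.range n,
            ENNReal.ofReal (transP lam mu (extPath k i (k+j)) (extPath k i (k+j+1)))) := by
          ring
  calc ENNReal.ofReal ((lam/(lam+mu))^n)
      = ∑' i, ENNReal.ofReal ((lam/(lam+mu))^n) * P (C' i) := by
        rw [ENNReal.tsum_mul_left, hsum', mul_one]
  _ ≤ ∑' i, P (C i) := ENNReal.tsum_le_tsum hfac
  _ ≤ _ := hle1

/-- **Lower bound in the sublinear (moderate deviations) regime.** If `φ(T) → ∞`,
`φ(T)/T → 0`, and `φ(T)/T^a → ∞` for some `a ∈ (0,1)`, then for every `x > 0`,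
`liminf_{T→∞} (1/φ(T)) ln P(ξ(T)/φ(T) ≥ x) ≥ -x ln((λ+μ)/λ)`. -/
theorem mdp_lower_bound_poisson_uniform_catastrophes
    {Ω : Type*} [MeasurableSpace Ω] (P : Measure Ω) [IsProbabilityMeasure P]
    (lam mu alpha : ℝ) (hlam : 0 < lam) (hmu : 0 < mu) (halpha : 0 < alpha)
    (η : ℕ → Ω → ℕ) (ν : ℝ → Ω → ℕ)
    (hη : IsMarkovChainFrom P lam mu 0 η)
    (hν : IsPoissonProcess P alpha ν)
    (hind : IndepProc P η ν)
    (φ : ℝ → ℝ) (hφpos : ∀ T > (0 : ℝ), 0 < φ T)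
    (hφ : Tendsto φ atTop atTop)
    (hφ0 : Tendsto (fun T => φ T / T) atTop (𝓝 0))
    (a : ℝ) (ha : a ∈ Set.Ioo (0 : ℝ) 1)
    (hφa : Tendsto (fun T => φ T / T ^ a) atTop atTop)
    (x : ℝ) (hx : 0 < x) :
    ((-(x * Real.log ((lam + mu) / lam)) : ℝ) : EReal) ≤
      Filter.liminf
        (fun T => (((φ T)⁻¹ : ℝ) : EReal) *
          ENNReal.log (P {ω | x ≤ (η (ν T ω) ω : ℝ) / φ T}))
        atTop := by
  obtain ⟨ha0, ha1⟩ := ha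
  have hlm : (0:ℝ) < lam + mu := by linarith
  have hr0 : (0:ℝ) < lam / (lam + mu) := div_pos hlam hlm
  have hlogr : Real.log (lam / (lam + mu)) = -Real.log ((lam+mu)/lam) := by
    rw [show (lam+mu)/lam = (lam/(lam+mu))⁻¹ by rw [inv_div], Real.log_inv, neg_neg]
  set h' : ℝ → ℝ := fun T => (φ T)⁻¹ *
      ((⌈x * φ T⌉₊ : ℝ) * Real.log (lam / (lam + mu)) - (2 + Real.log (alpha * T))) with hh'
  -- Convergence of the explicit lower bound
  have tend : Tendsto h' atTop (𝓝 (x * Real.log (lam / (lam + mu)))) := by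
    have hφev : ∀ᶠ T in atTop, 0 < φ T :=
      (eventually_gt_atTop 0).mono fun T hT => hφpos T hT
    have t1 : Tendsto (fun T => (⌈x * φ T⌉₊ : ℝ) / φ T) atTop (𝓝 x) := by
      apply tendsto_of_tendsto_of_tendsto_of_le_of_le' tendsto_const_nhds
        (show Tendsto (fun T => x + (φ T)⁻¹) atTop (𝓝 x) by
          simpa using tendsto_const_nhds.add hφ.inv_tendsto_atTop)
      · filter_upwards [hφev] with T hT
        rw [le_div_iff₀ hT]
        exact Nat.le_ceil _
      · filter_upwards [hφev] with T hT
        rw [div_le_iff₀ hT, add_mul, inv_mul_cancel₀ hT.ne']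
        exact (Nat.ceil_lt_add_one (by positivity)).le
    have hTa : Tendsto (fun T : ℝ => T ^ a) atTop atTop := tendsto_rpow_atTop ha0
    have l3 : Tendsto (fun T : ℝ => (2 + Real.log (alpha*T)) / T ^ a) atTop (𝓝 0) := by
      have e1 : Tendsto (fun T:ℝ => (2 + Real.log alpha) / T ^ a) atTop (𝓝 0) :=
        tendsto_const_nhds.div_atTop hTa
      have e2 : Tendsto (fun T:ℝ => Real.log T / T ^ a) atTop (𝓝 0) :=
        (isLittleO_log_rpow_atTop ha0).tendsto_div_nhds_zero
      have e3 := e1.add e2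
      rw [add_zero] at e3
      apply e3.congr'
      filter_upwards [eventually_gt_atTop 0] with T hT
      rw [Real.log_mul halpha.ne' hT.ne']
      ring
    have t2 : Tendsto (fun T => (2 + Real.log (alpha * T)) / φ T) atTop (𝓝 0) := by
      apply tendsto_of_tendsto_of_tendsto_of_le_of_le' tendsto_const_nhds l3
      · filter_upwards [hφev, eventually_ge_atTop (1/alpha)] with T hT hT2
        have h1 : (1:ℝ) ≤ alpha * T := by
          rw [div_le_iff₀ halpha] at hT2; linarith [hT2]
        have : (0:ℝ) ≤ 2 + Real.log (alpha * T) := by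
          have := Real.log_nonneg h1; linarith
        positivity
      · filter_upwards [hφev, eventually_ge_atTop (1/alpha), eventually_gt_atTop (0:ℝ),
          hφa.eventually_ge_atTop 1] with T hT hT2 hT3 hT4
        have hTapos : (0:ℝ) < T ^ a := Real.rpow_pos_of_pos hT3 a
        have h1 : (1:ℝ) ≤ alpha * T := by
          rw [div_le_iff₀ halpha] at hT2; linarith [hT2]
        have hnum : (0:ℝ) ≤ 2 + Real.log (alpha * T) := by
          have := Real.log_nonneg h1; linarith
        have hφge : T ^ a ≤ φ T := by
          rw [le_div_iff₀ hTapos, one_mul] at hT4; exact hT4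
        exact div_le_div_of_nonneg_left hnum hTapos hφge
    have := (t1.mul_const (Real.log (lam / (lam + mu)))).sub t2
    rw [sub_zero] at this
    apply this.congr
    intro T
    rw [hh']
    ring
  -- Eventual lower bound on the liminf functional
  have hev : ∀ᶠ T in atTop, ((h' T : ℝ) : EReal) ≤
      (((φ T)⁻¹ : ℝ) : EReal) *
        ENNReal.log (P {ω | x ≤ (η (ν T ω) ω : ℝ) / φ T}) := by
    have hF3 : ∀ᶠ T in atTop, x * φ T + 2 ≤ alpha * T := by
      filter_upwards [hφ0.eventually (gt_mem_nhds (show (0:ℝ) < alpha/(2*x) by positivity)),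
        eventually_ge_atTop (4/alpha), eventually_gt_atTop (0:ℝ)] with T h1 h2 h3
      have hx1 : φ T / T * x ≤ alpha/(2*x) * x := by nlinarith [hφpos T h3]
      have hφTx : x * φ T ≤ alpha/(2*x) * x * T := by
        rw [div_mul_eq_mul_div, div_le_iff₀ h3] at hx1
        nlinarith
      have : alpha/(2*x) * x = alpha / 2 := by field_simp
      rw [this] at hφTx
      have h4 : (2:ℝ) ≤ alpha / 2 * T := by
        rw [div_le_iff₀ halpha] at h2
        nlinarith
      nlinarith
    filter_upwards [eventually_ge_atTop (1:ℝ), eventually_ge_atTop (1/alpha), hF3]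
      with T hT1 hT2 hT3
    have hT0 : (0:ℝ) < T := lt_of_lt_of_le one_pos hT1
    have hφT : 0 < φ T := hφpos T hT0
    have hαT1 : (1:ℝ) ≤ alpha * T := by
      rw [div_le_iff₀ halpha] at hT2; linarith [hT2]
    have hαT0 : (0:ℝ) < alpha * T := by linarith
    set nT := ⌈x * φ T⌉₊ with hnT
    set mT := ⌊alpha * T⌋₊ with hmT
    have hm1 : 1 ≤ mT := Nat.le_floor (by exact_mod_cast hαT1)
    have hm0 : (0:ℝ) < mT := by exact_mod_cast hm1
    have hmreal : (mT:ℝ) ≤ alpha * T := Nat.floor_le hαT0.le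
    have hmreal2 : alpha * T - 1 < (mT:ℝ) := Nat.sub_one_lt_floor _
    have hnreal : x * φ T ≤ (nT:ℝ) := Nat.le_ceil _
    have hnreal2 : (nT:ℝ) < x * φ T + 1 := Nat.ceil_lt_add_one (by positivity)
    have hnm : nT ≤ mT := by
      have h : (nT:ℝ) < (mT:ℝ) := by linarith
      exact_mod_cast h.le
    set kT := mT - nT with hkT
    have hkn : kT + nT = mT := Nat.sub_add_cancel hnm
    -- inclusion of the product event in the target event
    have hincl : {ω | ∀ j < nT, η (kT+j+1) ω = η (kT+j) ω + 1} ∩ {ω | ν T ω = mT}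
        ⊆ {ω | x ≤ (η (ν T ω) ω : ℝ) / φ T} := by
      rintro ω ⟨hωA, hωB⟩
      have hchain : ∀ j, j ≤ nT → η (kT + j) ω = η kT ω + j := by
        intro j
        induction j with
        | zero => intro _; rfl
        | succ j ihj =>
          intro hj
          rw [show kT + (j+1) = kT + j + 1 by ring, hωA j (by omega), ihj (by omega),
            Nat.add_assoc]
      have hm : η mT ω = η kT ω + nT := by rw [← hkn]; exact hchain nT le_rfl
      have hb : ν T ω = mT := hωB
      have hge : (nT:ℝ) ≤ (η (ν T ω) ω : ℝ) := by
        rw [hb, hm]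
        push_cast
        have h0 : (0:ℝ) ≤ (η kT ω : ℝ) := Nat.cast_nonneg _
        linarith
      rw [mem_setOf_eq, le_div_iff₀ hφT]
      linarith
    -- independence
    have hAm : MeasurableSet {f : ℕ → ℕ | ∀ j < nT, f (kT+j+1) = f (kT+j) + 1} := by
      have h : {f : ℕ → ℕ | ∀ j < nT, f (kT+j+1) = f (kT+j) + 1}
          = ⋂ (j : ℕ), ⋂ (_ : j < nT),
            (fun f : ℕ → ℕ => (f (kT+j+1), f (kT+j))) ⁻¹' {p : ℕ × ℕ | p.1 = p.2 + 1} := by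
        ext f; simp
      rw [h]
      exact MeasurableSet.iInter fun j => MeasurableSet.iInter fun _ =>
        ((measurable_pi_apply _).prodMk (measurable_pi_apply _))
          ((Set.to_countable _).measurableSet)
    have hBm : MeasurableSet {g : ℝ → ℕ | g T = mT} := by
      have h : {g : ℝ → ℕ | g T = mT} = (fun g : ℝ → ℕ => g T) ⁻¹' {mT} := rfl
      rw [h]
      exact (measurable_pi_apply T) (measurableSet_singleton mT)
    have hPAB : P ({ω | ∀ j < nT, η (kT+j+1) ω = η (kT+j) ω + 1} ∩ {ω | ν T ω = mT})
        = P {ω | ∀ j < nT, η (kT+j+1) ω = η (kT+j) ω + 1} * P {ω | ν T ω = mT} :=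
      hind.measure_inter_preimage_eq_mul _ _ hAm hBm
    -- probability bounds
    have hPA := chain_step_lb P hlam hmu hη kT nT
    have hPB : P {ω | ν T ω = mT}
        = ENNReal.ofReal (Real.exp (-(alpha*T)) * (alpha*T)^mT / mT.factorial) := by
      have h5 := hν.2.2.2.2 0 T le_rfl (by linarith) mT
      have heq : {ω | ν T ω - ν 0 ω = mT} = {ω | ν T ω = mT} := by
        ext ω; simp [hν.2.1 ω]
      rw [heq] at h5
      rw [h5]
      norm_num
    have hρpos : (0:ℝ) < (lam/(lam+mu))^nT *
        (Real.exp (-(alpha*T)) * (alpha*T)^mT / mT.factorial) := by positivity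
    have hPmain : ENNReal.ofReal ((lam/(lam+mu))^nT *
          (Real.exp (-(alpha*T)) * (alpha*T)^mT / mT.factorial))
        ≤ P {ω | x ≤ (η (ν T ω) ω : ℝ) / φ T} := by
      rw [ENNReal.ofReal_mul (by positivity)]
      calc ENNReal.ofReal ((lam/(lam+mu))^nT) *
            ENNReal.ofReal (Real.exp (-(alpha*T)) * (alpha*T)^mT / mT.factorial)
          ≤ P {ω | ∀ j < nT, η (kT+j+1) ω = η (kT+j) ω + 1} * P {ω | ν T ω = mT} :=
            mul_le_mul' hPA (le_of_eq hPB.symm)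
      _ = P ({ω | ∀ j < nT, η (kT+j+1) ω = η (kT+j) ω + 1} ∩ {ω | ν T ω = mT}) := hPAB.symm
      _ ≤ _ := measure_mono hincl
    -- log bound
    have hlogb : (nT:ℝ) * Real.log (lam/(lam+mu)) - (2 + Real.log (alpha*T))
        ≤ Real.log ((lam/(lam+mu))^nT *
            (Real.exp (-(alpha*T)) * (alpha*T)^mT / mT.factorial)) := by
      have hfactpos : (0:ℝ) < mT.factorial := by positivity
      have hexp : Real.log ((lam/(lam+mu))^nT *
            (Real.exp (-(alpha*T)) * (alpha*T)^mT / mT.factorial))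
          = (nT:ℝ) * Real.log (lam/(lam+mu))
            + (-(alpha*T) + (mT:ℝ) * Real.log (alpha*T) - Real.log (mT.factorial : ℝ)) := by
        rw [Real.log_mul (by positivity) (by positivity),
          Real.log_div (by positivity) hfactpos.ne',
          Real.log_mul (by positivity) (by positivity),
          Real.log_exp, Real.log_pow, Real.log_pow]
      rw [hexp]
      have hfact : Real.log (mT.factorial : ℝ)
          ≤ 1 + Real.log mT + mT * Real.log mT - mT := by
        calc Real.log (mT.factorial : ℝ)
            ≤ Real.log (Real.exp 1 * mT * ((mT:ℝ)/Real.exp 1)^mT) :=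
              Real.log_le_log hfactpos (factorial_le_aux mT hm1)
        _ = 1 + Real.log mT + mT * Real.log mT - mT := by
            rw [Real.log_mul (by positivity) (by positivity),
              Real.log_mul (Real.exp_ne_zero 1) hm0.ne', Real.log_exp, Real.log_pow,
              Real.log_div hm0.ne' (Real.exp_ne_zero 1), Real.log_exp]
            ring
      have hlogm : Real.log (mT:ℝ) ≤ Real.log (alpha * T) := Real.log_le_log hm0 hmreal
      have hmlogm : (mT:ℝ) * Real.log mT ≤ (mT:ℝ) * Real.log (alpha*T) :=
        mul_le_mul_of_nonneg_left hlogm hm0.le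
      linarith
    -- EReal conclusion
    have hinv : (0:ℝ) ≤ (φ T)⁻¹ := inv_nonneg.mpr hφT.le
    calc ((h' T : ℝ) : EReal)
        ≤ (((φ T)⁻¹ * Real.log ((lam/(lam+mu))^nT *
            (Real.exp (-(alpha*T)) * (alpha*T)^mT / mT.factorial)) : ℝ) : EReal) := by
          apply EReal.coe_le_coe_iff.mpr
          rw [hh']
          exact mul_le_mul_of_nonneg_left hlogb hinv
    _ = (((φ T)⁻¹ : ℝ) : EReal) * ((Real.log ((lam/(lam+mu))^nT *
            (Real.exp (-(alpha*T)) * (alpha*T)^mT / mT.factorial)) : ℝ) : EReal) :=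
          EReal.coe_mul _ _
    _ ≤ (((φ T)⁻¹ : ℝ) : EReal) *
          ENNReal.log (P {ω | x ≤ (η (ν T ω) ω : ℝ) / φ T}) := by
          apply mul_le_mul_of_nonneg_left _ (by exact_mod_cast hinv : (0:EReal) ≤ _)
          have h2 : ((Real.log ((lam/(lam+mu))^nT *
              (Real.exp (-(alpha*T)) * (alpha*T)^mT / mT.factorial)) : ℝ) : EReal)
              = ENNReal.log (ENNReal.ofReal ((lam/(lam+mu))^nT *
                (Real.exp (-(alpha*T)) * (alpha*T)^mT / mT.factorial))) := by
            rw [ENNReal.log_ofReal_of_pos hρpos]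
          rw [h2]
          exact ENNReal.log_monotone hPmain
  -- Conclusion via liminf
  calc ((-(x * Real.log ((lam + mu) / lam)) : ℝ) : EReal)
      = ((x * Real.log (lam / (lam + mu)) : ℝ) : EReal) := by
        rw [hlogr]; ring_nf
  _ = Filter.liminf (fun T => ((h' T : ℝ) : EReal)) atTop :=
      ((EReal.tendsto_coe.mpr tend).liminf_eq).symm
  _ ≤ _ := Filter.liminf_le_liminf hev
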